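/- Let V be a finite-dimensional complex vector space, b a nondegenerate symmetric bilinear form on V, and T : V → V a linear endomorphism that is b-symmetric, i.e. b(Tx, y) = b(x, Ty) for all x, y ∈ V. Then for every λ ∈ ℂ, the restriction of b to the generalized λ-eigenspace of T is a nondegenerate bilinear form on that subspace. -/
import Mathlib

/-- Orthogonality of generalized eigenvectors for distinct eigenvalues. -/
lemma bilin_orth_aux
    {V : Type*} [AddCommGroup V] [Module ℂ V]
    (b : LinearMap.BilinForm ℂ V)
    (T : Module.End ℂ V) (hT : ∀ x y, b (T x) y = b x (T y))
    (lam mu : ℂ) (hne : lam ≠ mu) :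
    ∀ n : ℕ, ∀ N M : ℕ, N + M ≤ n → ∀ x y : V,
      ((T - lam • 1) ^ N) x = 0 → ((T - mu • 1) ^ M) y = 0 → b x y = 0 := by
  intro n
  induction n with
  | zero =>
    intro N M hNM x y hx hy
    have hN : N = 0 := by omega
    subst hN; simp at hx; subst hx; simp
  | succ n ih =>
    intro N M hNM x y hx hy
    match N, M with
    | 0, M => simp at hx; subst hx; simp
    | N, 0 => simp at hy; subst hy; simp
    | N+1, M+1 =>
      have h1 : ((T - lam • 1) ^ N) ((T - lam • 1) x) = 0 := by
        rw [← Module.End.mul_apply, ← pow_succ]; exact hx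
      have h2 : ((T - mu • 1) ^ M) ((T - mu • 1) y) = 0 := by
        rw [← Module.End.mul_apply, ← pow_succ]; exact hy
      have e1 : b ((T - lam • 1) x) y = 0 := ih N (M+1) (by omega) _ _ h1 hy
      have e2 : b x ((T - mu • 1) y) = 0 := ih (N+1) M (by omega) _ _ hx h2
      have key : (lam - mu) * b x y = b x ((T - mu • 1) y) - b ((T - lam • 1) x) y := by
        have : b ((T - lam • 1) x) y = b (T x) y - lam * b x y := by
          simp [LinearMap.sub_apply, LinearMap.smul_apply, Module.End.one_apply]
        have h2' : b x ((T - mu • 1) y) = b x (T y) - mu * b x y := by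
          simp [LinearMap.sub_apply, LinearMap.smul_apply, Module.End.one_apply]
        rw [this, h2', hT]; ring
      have : (lam - mu) * b x y = 0 := by rw [key, e1, e2, sub_zero]
      exact (mul_eq_zero.mp this).resolve_left (sub_ne_zero.mpr hne)

/-- The restriction of a nondegenerate symmetric bilinear form to a generalized
eigenspace of a `b`-symmetric endomorphism is nondegenerate. -/
theorem bilin_nondegenerate_on_generalized_eigenspace
    {V : Type*} [AddCommGroup V] [Module ℂ V] [FiniteDimensional ℂ V]
    (b : LinearMap.BilinForm ℂ V) (hb : ∀ x y, b x y = b y x)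
    (hnd : ∀ x, (∀ y, b x y = 0) → x = 0)
    (T : Module.End ℂ V) (hT : ∀ x y, b (T x) y = b x (T y))
    (lam : ℂ) :
    ∀ x : V, (∃ N : ℕ, ((T - lam • 1) ^ N) x = 0) →
      (∀ y : V, (∃ M : ℕ, ((T - lam • 1) ^ M) y = 0) → b x y = 0) → x = 0 := by
  intro x hx hxorth
  apply hnd
  intro y
  have hy : y ∈ ⨆ μ : ℂ, T.maxGenEigenspace μ := by
    rw [Module.End.iSup_maxGenEigenspace_eq_top]; trivial
  induction hy using Submodule.iSup_induction' with
  | mem μ z hz =>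
    rcases (T.mem_maxGenEigenspace μ z).mp hz with ⟨M, hM⟩
    by_cases hμ : μ = lam
    · exact hxorth z ⟨M, by rw [← hμ]; exact hM⟩
    · obtain ⟨N, hN⟩ := hx
      exact bilin_orth_aux b T hT lam μ (Ne.symm hμ) (N + M) N M le_rfl x z hN hM
  | zero => simp
  | add z w _ _ hz hw => rw [map_add, hz, hw, add_zero]
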